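/- Let A ⊂ ℝᵏ and B ⊂ ℝˡ be convex bodies each containing the origin. Define A ×₁ B := { (tx, (1-t)y) : x ∈ A, y ∈ B, 0 ≤ t ≤ 1 } ⊂ ℝ^{k+l}. Then the Lebesgue volume satisfies |A ×₁ B| = (k! · l! / (k+l)!) · |A| · |B|. -/

import Mathlib

open MeasureTheory Set Pointwise
open scoped ENNReal

section JoinAux
variable {E : Type*} [NormedAddCommGroup E] [NormedSpace ℝ E]

variable {E : Type*} [NormedAddCommGroup E] [NormedSpace ℝ E]

/-- star-shape monotonicity of dilates -/
theorem join_smul_subset {C : Set E} (hC : Convex ℝ C) (h0 : (0:E) ∈ C)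
    {s t : ℝ} (hs : 0 ≤ s) (hst : s ≤ t) : s • C ⊆ t • C := by
  rcases eq_or_lt_of_le (hs.trans hst) with ht | ht
  · have : s = 0 := le_antisymm (hst.trans ht.symm.le) hs
    rw [this, ← ht]
  · rintro x ⟨c, hc, rfl⟩
    refine ⟨(s/t) • c, (hC.starConvex h0).smul_mem hc (by positivity) ?_, ?_⟩
    · exact div_le_one_of_le₀ hst ht.le
    · show t • ((s/t) • c) = s • c
      rw [smul_smul, mul_div_cancel₀ _ ht.ne']

theorem join_mem_smul_of_gauge_le {C : Set E} (hcpt : IsCompact C) (hC : Convex ℝ C)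
    (h0 : (0:E) ∈ C) {u : E} (hu : u ∈ C) {s : ℝ} (hs : 0 < s) (hg : gauge C u ≤ s) :
    u ∈ s • C := by
  have key : ∀ r : ℝ, s < r → r⁻¹ • u ∈ C := by
    intro r hr
    have hne : {r : ℝ | 0 < r ∧ u ∈ r • C}.Nonempty := ⟨1, one_pos, by simpa using hu⟩
    have hbdd : BddBelow {r : ℝ | 0 < r ∧ u ∈ r • C} := ⟨0, fun x hx => hx.1.le⟩
    have : gauge C u < r := lt_of_le_of_lt hg hr
    rw [gauge, csInf_lt_iff hbdd hne] at this
    obtain ⟨r', ⟨hr'pos, hur'⟩, hr'lt⟩ := this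
    have : u ∈ r • C := join_smul_subset hC h0 hr'pos.le hr'lt.le hur'
    rwa [mem_smul_set_iff_inv_smul_mem₀ (hs.trans hr).ne'] at this
  rw [mem_smul_set_iff_inv_smul_mem₀ hs.ne']
  have htend : Filter.Tendsto (fun n : ℕ => (s + ((n:ℝ)+1)⁻¹)⁻¹ • u) Filter.atTop
      (nhds (s⁻¹ • u)) := by
    have h1 : Filter.Tendsto (fun n : ℕ => s + ((n:ℝ)+1)⁻¹) Filter.atTop (nhds (s + 0)) := by
      have h0' := tendsto_one_div_add_atTop_nhds_zero_nat (𝕜 := ℝ)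
      simp only [one_div] at h0'
      exact Filter.Tendsto.const_add s h0'
    rw [add_zero] at h1
    exact ((h1.inv₀ hs.ne').smul_const u)
  refine hcpt.isClosed.mem_of_tendsto htend (Filter.Eventually.of_forall fun n => ?_)
  exact key _ (lt_add_of_pos_right s (by positivity))

theorem join_eq_zero_of_gauge_eq_zero {C : Set E} (hcpt : IsCompact C) (hC : Convex ℝ C)
    (h0 : (0:E) ∈ C) {u : E} (hu : u ∈ C) (hg : gauge C u = 0) : u = 0 := by
  obtain ⟨R, hR⟩ := hcpt.isBounded.exists_norm_le
  have key : ∀ s : ℝ, 0 < s → ‖u‖ ≤ s * R := by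
    intro s hs
    have := join_mem_smul_of_gauge_le hcpt hC h0 hu hs (hg.le.trans hs.le)
    obtain ⟨c, hc, rfl⟩ := this
    rw [norm_smul, Real.norm_eq_abs, abs_of_nonneg hs.le]
    exact mul_le_mul_of_nonneg_left (hR c hc) hs.le
  have hR0 : 0 ≤ R := le_trans (norm_nonneg _) (hR 0 h0)
  have : ‖u‖ ≤ 0 := by
    by_contra h
    push_neg at h
    have := key (‖u‖ / (2 * (R + 1))) (by positivity)
    rw [div_mul_eq_mul_div, le_div_iff₀ (by positivity)] at this
    nlinarith [mul_nonneg h.le hR0]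
  simpa using le_antisymm this (norm_nonneg u)

end JoinAux

theorem join_betaNat (n : ℕ) : ∀ m : ℕ, ∫ x in (0:ℝ)..1, x ^ m * (1 - x) ^ n =
    (Nat.factorial m * Nat.factorial n : ℝ) / (Nat.factorial (m + n + 1)) := by
  induction n with
  | zero =>
    intro m
    simp only [pow_zero, mul_one, Nat.factorial_zero, Nat.cast_one, integral_pow]
    rw [Nat.add_zero, Nat.factorial_succ]
    push_cast
    field_simp
    simp
  | succ n ih =>
    intro m
    have hv : ∀ x ∈ uIcc (0:ℝ) 1, HasDerivAt (fun y : ℝ => y ^ (m+1) / (m+1))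
        (x ^ m) x := by
      intro x _
      have h := (hasDerivAt_pow (m+1) x).div_const ((m:ℝ)+1)
      have : ((m:ℝ)+1) * x ^ m / ((m:ℝ)+1) = x ^ m := by
        field_simp
      simpa [Nat.cast_add, Nat.cast_one, this] using h
    have hu : ∀ x ∈ uIcc (0:ℝ) 1, HasDerivAt (fun y : ℝ => (1 - y) ^ (n+1))
        (-(((n:ℝ)+1) * (1 - x) ^ n)) x := by
      intro x _
      have h1 : HasDerivAt (fun y : ℝ => 1 - y) (-1) x := by
        simpa using (hasDerivAt_id x).const_sub 1
      have := h1.pow (n+1)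
      change HasDerivAt (fun y : ℝ => (1 - y) ^ (n+1)) _ x at this
      simpa [mul_comm, mul_assoc] using this
    have hIBP := intervalIntegral.integral_mul_deriv_eq_deriv_mul hu hv
      (Continuous.intervalIntegrable (by continuity) 0 1)
      (Continuous.intervalIntegrable (by continuity) 0 1)
    have hcomm : ∫ x in (0:ℝ)..1, x ^ m * (1 - x) ^ (n+1)
        = ∫ x in (0:ℝ)..1, (1 - x) ^ (n+1) * x ^ m := by
      congr 1; ext x; ring
    rw [hcomm, hIBP]
    have hsimp : ∀ x : ℝ, -(((n:ℝ)+1) * (1 - x) ^ n) * (x ^ (m+1) / (m+1))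
        = -((((n:ℝ)+1)/((m:ℝ)+1)) * (x ^ (m+1) * (1 - x) ^ n)) := by
      intro x
      rw [div_eq_mul_inv, div_eq_mul_inv]
      ring
    simp only [hsimp, intervalIntegral.integral_neg, intervalIntegral.integral_const_mul, ih (m+1)]
    have hmn : (Nat.factorial (m+1) : ℝ) = (m+1) * Nat.factorial m := by
      rw [Nat.factorial_succ]; push_cast; ring
    have hfn : (Nat.factorial (n+1) : ℝ) = (n+1) * Nat.factorial n := by
      rw [Nat.factorial_succ]; push_cast; ring
    have harr : m + 1 + n + 1 = m + (n+1) + 1 := by ring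
    rw [harr] at *
    simp only [one_pow, zero_pow, hmn, hfn]
    have hne : (Nat.factorial (m + (n+1) + 1) : ℝ) ≠ 0 := by positivity
    field_simp
    ring

set_option maxHeartbeats 1000000

/-- For convex bodies `A ⊂ ℝᵏ`, `B ⊂ ℝˡ` containing the origin,
the join `A ×₁ B = { (tx,(1-t)y) : x ∈ A, y ∈ B, 0 ≤ t ≤ 1 }` has Lebesgue volume
`(k! l! / (k+l)!) |A| |B|`. -/
theorem volume_join {k l : ℕ}
    (A : Set (Fin k → ℝ)) (B : Set (Fin l → ℝ))
    (hAcpt : IsCompact A) (hAconv : Convex ℝ A) (hAint : (interior A).Nonempty)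
    (hBcpt : IsCompact B) (hBconv : Convex ℝ B) (hBint : (interior B).Nonempty)
    (hA0 : (0 : Fin k → ℝ) ∈ A) (hB0 : (0 : Fin l → ℝ) ∈ B) :
    volume {p : (Fin k → ℝ) × (Fin l → ℝ) |
        ∃ x ∈ A, ∃ y ∈ B, ∃ t : ℝ, 0 ≤ t ∧ t ≤ 1 ∧ p = (t • x, (1 - t) • y)} =
      ((Nat.factorial k * Nat.factorial l : ℝ≥0∞) / (Nat.factorial (k + l) : ℝ≥0∞)) *
        volume A * volume B := by
  set J : Set ((Fin k → ℝ) × (Fin l → ℝ)) :=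
    {p | ∃ x ∈ A, ∃ y ∈ B, ∃ t : ℝ, 0 ≤ t ∧ t ≤ 1 ∧ p = (t • x, (1 - t) • y)} with hJdef
  -- J is compact, hence measurable
  have hJeq : J = (fun q : ℝ × ((Fin k → ℝ) × (Fin l → ℝ)) =>
      ((q.1 • q.2.1, (1 - q.1) • q.2.2) : (Fin k → ℝ) × (Fin l → ℝ))) ''
      ((Icc (0:ℝ) 1) ×ˢ (A ×ˢ B)) := by
    ext p
    constructor
    · rintro ⟨x, hx, y, hy, t, ht0, ht1, rfl⟩
      exact ⟨(t, (x, y)), ⟨⟨ht0, ht1⟩, hx, hy⟩, rfl⟩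
    · rintro ⟨⟨t, x, y⟩, ⟨⟨ht0, ht1⟩, hx, hy⟩, rfl⟩
      exact ⟨x, hx, y, hy, t, ht0, ht1, rfl⟩
  have hJcpt : IsCompact J := by
    rw [hJeq]
    exact ((isCompact_Icc.prod (hAcpt.prod hBcpt)).image (by fun_prop))
  have hJm : MeasurableSet J := hJcpt.measurableSet
  have hBfin : volume B ≠ ⊤ := hBcpt.measure_lt_top.ne
  have hAfin : volume A ≠ ⊤ := hAcpt.measure_lt_top.ne
  obtain rfl | ⟨m, rfl⟩ : l = 0 ∨ ∃ m, l = m + 1 := by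
    rcases l with _ | m
    exacts [Or.inl rfl, Or.inr ⟨m, rfl⟩]
  · -- degenerate case l = 0
    have hJ : J = A ×ˢ (univ : Set (Fin 0 → ℝ)) := by
      ext p
      constructor
      · rintro ⟨x, hx, y, hy, t, ht0, ht1, rfl⟩
        exact ⟨(hAconv.starConvex hA0).smul_mem hx ht0 ht1, trivial⟩
      · rintro ⟨h1, -⟩
        refine ⟨p.1, h1, 0, hB0, 1, zero_le_one, le_refl 1, ?_⟩
        rw [Prod.ext_iff]
        exact ⟨(one_smul ℝ p.1).symm, Subsingleton.elim _ _⟩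
    have huniv : volume (univ : Set (Fin 0 → ℝ)) = 1 := by
      rw [volume_pi, Measure.pi_univ]
      simp
    have hBuniv : B = univ := eq_univ_of_forall fun x => by rwa [Subsingleton.elim x 0]
    rw [hJ, Measure.volume_eq_prod, Measure.prod_prod, huniv, hBuniv, huniv]
    simp only [Nat.factorial_zero, Nat.cast_one, mul_one, Nat.add_zero]
    rw [ENNReal.div_self (by exact_mod_cast k.factorial_ne_zero) (by simp), one_mul]
  -- main case l = m + 1
  set g : (Fin k → ℝ) → ℝ := gauge A with hgdef
  set f : (Fin k → ℝ) → ℝ := A.indicator (fun u => 1 - g u) with hfdef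
  have hf_nn : ∀ u, 0 ≤ f u := by
    intro u
    apply Set.indicator_nonneg
    intro x hx
    have := gauge_le_one_of_mem hx
    linarith
  have hf_le1 : ∀ u, f u ≤ 1 := by
    intro u
    rcases em (u ∈ A) with h | h
    · rw [hfdef, Set.indicator_of_mem h]
      have := gauge_nonneg (s := A) u
      simp only [hgdef]
      linarith
    · rw [hfdef, Set.indicator_of_notMem h]; exact zero_le_one
  have hfA : ∀ u ∈ A, f u = 1 - g u := fun u hu => Set.indicator_of_mem hu _
  -- level sets
  have hlevel : ∀ s : ℝ, 0 < s → s ≤ 1 →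
      volume {u | 1 - s < f u} = ENNReal.ofReal (s ^ k) * volume A := by
    intro s hs hs1
    have hsub1 : {u | 1 - s < f u} ⊆ s • A := by
      intro u hu
      have hfu : 1 - s < f u := hu
      have huA : u ∈ A := by
        by_contra h
        rw [hfdef, Set.indicator_of_notMem h] at hfu
        linarith
      have hgu : g u < s := by
        have := hfA u huA
        linarith [hfu, this]
      exact join_mem_smul_of_gauge_le hAcpt hAconv hA0 huA hs hgu.le
    have hsub2 : s • A \ s • (frontier A) ⊆ {u | 1 - s < f u} := by
      rintro u ⟨⟨a, ha, rfl⟩, hnot⟩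
      have haint : a ∈ interior A := by
        by_contra h
        have : a ∈ frontier A := by
          rw [hAcpt.isClosed.frontier_eq]
          exact ⟨ha, h⟩
        exact hnot (smul_mem_smul_set this)
      have hga : gauge A a < 1 := interior_subset_gauge_lt_one A haint
      have hmem : s • a ∈ A := by
        have h1 : s • A ⊆ (1:ℝ) • A := join_smul_subset hAconv hA0 hs.le hs1
        have := h1 (smul_mem_smul_set ha)
        simpa using this
      have hgsa : g (s • a) = s * gauge A a := gauge_smul_of_nonneg hs.le a
      show 1 - s < f (s • a)
      rw [hfA _ hmem, hgsa]
      nlinarith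
    have hupper : volume {u | 1 - s < f u} ≤ ENNReal.ofReal (s ^ k) * volume A := by
      calc volume {u | 1 - s < f u} ≤ volume (s • A) := measure_mono hsub1
        _ = ENNReal.ofReal (s ^ k) * volume A := by
            rw [Measure.addHaar_smul_of_nonneg volume hs.le A, Module.finrank_fin_fun]
    have hlower : ENNReal.ofReal (s ^ k) * volume A ≤ volume {u | 1 - s < f u} := by
      have hnull : volume (s • (frontier A)) = 0 := by
        rw [Measure.addHaar_smul_of_nonneg volume hs.le, hAconv.addHaar_frontier volume,
          mul_zero]
      calc ENNReal.ofReal (s ^ k) * volume A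
          = volume (s • A) := by
            rw [Measure.addHaar_smul_of_nonneg volume hs.le A, Module.finrank_fin_fun]
        _ = volume (s • A \ s • (frontier A)) := (measure_diff_null hnull).symm
        _ ≤ volume {u | 1 - s < f u} := measure_mono hsub2
    exact le_antisymm hupper hlower
  -- measurability of f
  have hf_meas : Measurable f := by
    apply measurable_of_Ioi
    intro c
    rcases lt_or_ge c 0 with hc0 | hc0
    · convert MeasurableSet.univ
      ext u
      simp only [mem_preimage, mem_Ioi, mem_univ, iff_true]
      exact lt_of_lt_of_le hc0 (hf_nn u)
    rcases le_or_gt 1 c with hc1 | hc1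
    · convert MeasurableSet.empty
      ext u
      simp only [mem_preimage, mem_Ioi, mem_empty_iff_false, iff_false, not_lt]
      exact (hf_le1 u).trans hc1
    have hset : f ⁻¹' Ioi c =
        ⋃ q : ℚ, if 0 < (q:ℝ) ∧ (q:ℝ) < 1 - c then (q:ℝ) • A else ∅ := by
      ext u
      simp only [mem_preimage, mem_Ioi, mem_iUnion]
      constructor
      · intro hcu
        have huA : u ∈ A := by
          by_contra h
          rw [hfdef, Set.indicator_of_notMem h] at hcu
          linarith
        have hgu : g u < 1 - c := by
          have := hfA u huA
          linarith
        obtain ⟨q, hq1, hq2⟩ := exists_rat_btwn hgu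
        have hqpos : 0 < (q:ℝ) := lt_of_le_of_lt (gauge_nonneg u) hq1
        refine ⟨q, ?_⟩
        rw [if_pos ⟨hqpos, hq2⟩]
        exact join_mem_smul_of_gauge_le hAcpt hAconv hA0 huA hqpos hq1.le
      · rintro ⟨q, hq⟩
        split_ifs at hq with h
        · obtain ⟨hqpos, hqlt⟩ := h
          have hq1 : (q:ℝ) ≤ 1 := by linarith
          have huA : u ∈ A := by
            have h1 : (q:ℝ) • A ⊆ (1:ℝ) • A := join_smul_subset hAconv hA0 hqpos.le hq1
            have := h1 hq
            simpa using this
          have hgu : g u ≤ q := gauge_le_of_mem hqpos.le hq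
          rw [hfA u huA]
          linarith
        · exact absurd hq (notMem_empty u)
    rw [hset]
    refine MeasurableSet.iUnion fun q => ?_
    split_ifs
    · have : ((q:ℝ) • A : Set (Fin k → ℝ)) = (fun x => (q:ℝ) • x) '' A := rfl
      rw [this]
      exact (hAcpt.image (continuous_const_smul _)).measurableSet
    · exact MeasurableSet.empty
  -- slices of J
  have hslice : ∀ u v, ((u, v) ∈ J ↔ u ∈ A ∧ v ∈ (1 - g u) • B) := by
    intro u v
    constructor
    · rintro ⟨x, hx, y, hy, t, ht0, ht1, hp⟩
      rw [Prod.ext_iff] at hp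
      obtain ⟨hu, hv⟩ := hp
      simp only at hu hv
      subst hu; subst hv
      have huA : t • x ∈ A := (hAconv.starConvex hA0).smul_mem hx ht0 ht1
      have hgu : g (t • x) ≤ t := gauge_le_of_mem ht0 (smul_mem_smul_set hx)
      refine ⟨huA, ?_⟩
      have hsub : (1 - t) • B ⊆ (1 - g (t • x)) • B :=
        join_smul_subset hBconv hB0 (by linarith) (by linarith)
      exact hsub (smul_mem_smul_set hy)
    · rintro ⟨huA, hv⟩
      have ht0 : 0 ≤ g u := gauge_nonneg u
      have ht1 : g u ≤ 1 := gauge_le_one_of_mem huA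
      have hu : u ∈ g u • A := by
        rcases eq_or_lt_of_le ht0 with h | h
        · have hu0 : u = 0 := join_eq_zero_of_gauge_eq_zero hAcpt hAconv hA0 huA h.symm
          rw [← h, hu0, zero_smul_set ⟨0, hA0⟩]
          simp
        · exact join_mem_smul_of_gauge_le hAcpt hAconv hA0 huA h le_rfl
      obtain ⟨x, hx, hux⟩ := hu
      obtain ⟨y, hy, hvy⟩ := hv
      exact ⟨x, hx, y, hy, g u, ht0, ht1, by rw [Prod.ext_iff]; exact ⟨hux.symm, hvy.symm⟩⟩
  -- Fubini
  have hprod : volume J = ∫⁻ u, volume (Prod.mk u ⁻¹' J) := by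
    rw [Measure.volume_eq_prod]
    exact Measure.prod_apply hJm
  have hslice_vol : ∀ u, volume (Prod.mk u ⁻¹' J)
      = (ENNReal.ofReal (f u)) ^ (m + 1) * volume B := by
    intro u
    rcases em (u ∈ A) with huA | huA
    · have : Prod.mk u ⁻¹' J = (1 - g u) • B := by
        ext v
        simp only [mem_preimage]
        rw [hslice u v, and_iff_right huA]
      rw [this, Measure.addHaar_smul_of_nonneg volume
        (by linarith [gauge_le_one_of_mem huA] : (0:ℝ) ≤ 1 - g u) B,
        Module.finrank_fin_fun, hfA u huA, ENNReal.ofReal_pow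
        (by linarith [gauge_le_one_of_mem huA])]
    · have : Prod.mk u ⁻¹' J = ∅ := by
        ext v
        simp only [mem_preimage, mem_empty_iff_false, iff_false]
        rw [hslice u v]
        tauto
      rw [this, measure_empty, hfdef, Set.indicator_of_notMem huA]
      simp
  have key : volume J = (∫⁻ u, (ENNReal.ofReal (f u)) ^ (m + 1)) * volume B := by
    rw [hprod]
    rw [lintegral_congr hslice_vol]
    exact lintegral_mul_const' _ _ hBfin
  -- layer cake
  have hof : ∀ u, (ENNReal.ofReal (f u)) ^ (m + 1)
      = ENNReal.ofReal (∫ t in (0:ℝ)..f u, ((m:ℝ) + 1) * t ^ m) := by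
    intro u
    rw [intervalIntegral.integral_const_mul, integral_pow]
    rw [← ENNReal.ofReal_pow (hf_nn u)]
    congr 1
    have : ((m:ℝ) + 1) ≠ 0 := by positivity
    field_simp
    simp
  have hlayer := lintegral_comp_eq_lintegral_meas_lt_mul (volume : Measure (Fin k → ℝ))
    (f := f) (g := fun t => ((m:ℝ) + 1) * t ^ m)
    (Filter.Eventually.of_forall hf_nn) hf_meas.aemeasurable
    (fun t _ => Continuous.intervalIntegrable (continuous_const.mul (continuous_pow m)) 0 t)
    ((ae_restrict_iff' measurableSet_Ioi).mpr (Filter.Eventually.of_forall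
      (fun t ht => by
        have h't : (0:ℝ) < t := ht
        show (0:ℝ) ≤ ((m:ℝ) + 1) * t ^ m
        positivity)))
  rw [funext hof] at key
  rw [hlayer] at key
  -- split the integral
  have hsplit : ∫⁻ t in Ioi (0:ℝ), volume {a | t < f a} * ENNReal.ofReal (((m:ℝ) + 1) * t ^ m)
      = ∫⁻ t in Ioo (0:ℝ) 1, volume {a | t < f a} * ENNReal.ofReal (((m:ℝ) + 1) * t ^ m) := by
    rw [← Ioo_union_Ici_eq_Ioi (zero_lt_one (α := ℝ)),
      lintegral_union measurableSet_Ici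
        (Set.disjoint_left.mpr fun x hx hx' => hx.2.not_ge hx')]
    have hzero : ∫⁻ t in Ici (1:ℝ), volume {a | t < f a}
        * ENNReal.ofReal (((m:ℝ) + 1) * t ^ m) = 0 := by
      rw [setLIntegral_congr_fun measurableSet_Ici
        (fun t ht => ?_), lintegral_zero]
      have : {a | t < f a} = ∅ := by
        ext a
        simp only [mem_setOf_eq, mem_empty_iff_false, iff_false, not_lt]
        exact (hf_le1 a).trans ht
      rw [this, measure_empty, zero_mul]
    rw [hzero, add_zero]
  rw [hsplit] at key
  -- evaluate the integral over Ioo 0 1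
  have heval : ∫⁻ t in Ioo (0:ℝ) 1, volume {a | t < f a}
      * ENNReal.ofReal (((m:ℝ) + 1) * t ^ m)
      = volume A * ENNReal.ofReal (∫ t in Ioo (0:ℝ) 1, (1 - t) ^ k * (((m:ℝ) + 1) * t ^ m)) := by
    rw [setLIntegral_congr_fun measurableSet_Ioo
      (fun t ht => ?_)]
    · rw [lintegral_const_mul' _ _ hAfin]
      congr 1
      rw [ofReal_integral_eq_lintegral_ofReal]
      · exact ((Continuous.integrableOn_Icc (((continuous_const.sub continuous_id).pow k).mul (continuous_const.mul (continuous_pow m)))).mono_set Ioo_subset_Icc_self)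
      · exact (ae_restrict_iff' measurableSet_Ioo).mpr (Filter.Eventually.of_forall
          (fun t ht => mul_nonneg (pow_nonneg (by linarith [ht.2] : (0:ℝ) ≤ 1 - t) k)
            (mul_nonneg (by positivity) (pow_nonneg ht.1.le m))))
    · have h1 : volume {a | t < f a} = ENNReal.ofReal ((1 - t) ^ k) * volume A := by
        have := hlevel (1 - t) (by linarith [ht.2]) (by linarith [ht.1])
        simpa using this
      rw [h1, ENNReal.ofReal_mul (pow_nonneg (by linarith [ht.2] : (0:ℝ) ≤ 1 - t) k)]
      ring
  rw [heval] at key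
  -- compute the real integral
  have hint : ∫ t in Ioo (0:ℝ) 1, (1 - t) ^ k * (((m:ℝ) + 1) * t ^ m)
      = ((m:ℝ) + 1) * (Nat.factorial m * Nat.factorial k / (Nat.factorial (m + k + 1))) := by
    rw [← integral_Ioc_eq_integral_Ioo, ← intervalIntegral.integral_of_le zero_le_one]
    have : ∀ t : ℝ, (1 - t) ^ k * (((m:ℝ) + 1) * t ^ m) = ((m:ℝ) + 1) * (t ^ m * (1 - t) ^ k) := by
      intro t; ring
    rw [intervalIntegral.integral_congr (fun t _ => this t),
      intervalIntegral.integral_const_mul, join_betaNat k m]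
  rw [hint] at key
  -- final arithmetic
  have hconst : ENNReal.ofReal (((m:ℝ) + 1)
      * (Nat.factorial m * Nat.factorial k / (Nat.factorial (m + k + 1))))
      = ((Nat.factorial k * Nat.factorial (m + 1) : ℝ≥0∞) / (Nat.factorial (k + (m + 1)) : ℝ≥0∞)) := by
    have h1 : ((m:ℝ) + 1) * (Nat.factorial m * Nat.factorial k / (Nat.factorial (m + k + 1)))
        = ((Nat.factorial k * Nat.factorial (m + 1) : ℕ) : ℝ)
          / ((Nat.factorial (k + (m + 1)) : ℕ) : ℝ) := by
      have harr : k + (m + 1) = m + k + 1 := by ring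
      rw [harr]
      push_cast [Nat.factorial_succ]
      have : (Nat.factorial (m + k + 1) : ℝ) ≠ 0 := by positivity
      field_simp
    rw [h1, ENNReal.ofReal_div_of_pos (by positivity), ENNReal.ofReal_natCast,
      ENNReal.ofReal_natCast]
    push_cast
    ring_nf
  rw [key, hconst]
  ring
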